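/- A function f in the ring B₁(X) of Baire one functions on a topological space X is a unit of B₁(X) if and only if its zero-set Z(f) = {x ∈ X : f(x) = 0} is empty. -/

import Mathlib

/-- `f` in the ring `B₁(X)` of Baire one functions is a unit iff `Z(f) = ∅`. -/
theorem stmt_0 {X : Type*} [TopologicalSpace X] [Nonempty X]
    (B : Subring (X → ℝ))
    (hB : ∀ f : X → ℝ, f ∈ B ↔ ∃ u : ℕ → C(X, ℝ),
      ∀ x, Filter.Tendsto (fun n => (u n) x) Filter.atTop (nhds (f x)))
    (f : X → ℝ) (hf : f ∈ B) :
    IsUnit (⟨f, hf⟩ : B) ↔ {x | f x = 0} = ∅ := by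
  constructor
  · rintro ⟨u, hu⟩
    ext x
    simp only [Set.mem_setOf_eq, Set.mem_empty_iff_false, iff_false]
    intro hx
    have h1 : ((u * u⁻¹ : Bˣ) : B) = 1 := by simp
    have h2 : ((u : B) : X → ℝ) x * (((u⁻¹ : Bˣ) : B) : X → ℝ) x = 1 := by
      have h3 := congrFun (congrArg (fun g : B => (g : X → ℝ)) h1) x
      simp only [Subring.coe_mul, Pi.mul_apply, OneMemClass.coe_one, Pi.one_apply] at h3
      exact h3
    rw [hu] at h2
    simp only [hx, zero_mul] at h2
    exact zero_ne_one h2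
  · intro hZ
    have hne : ∀ x, f x ≠ 0 := fun x hx => by
      have : x ∈ ({x | f x = 0} : Set X) := hx
      rw [hZ] at this; exact this
    obtain ⟨u, hu⟩ := (hB f).mp hf
    set g : X → ℝ := fun x => (f x)⁻¹ with hg
    have hgB : g ∈ B := by
      rw [hB]
      have hpos : ∀ n : ℕ, ∀ x : X, (u n x) ^ 2 + 1 / (n + 1 : ℝ) ≠ 0 := by
        intro n x
        positivity
      refine ⟨fun n => ⟨fun x => u n x / ((u n x) ^ 2 + 1 / (n + 1 : ℝ)), ?_⟩, ?_⟩
      · exact ((u n).continuous).div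
          (((u n).continuous.pow 2).add continuous_const) (hpos n)
      · intro x
        have h1 : Filter.Tendsto (fun n : ℕ => u n x / ((u n x) ^ 2 + 1 / (n + 1 : ℝ)))
            Filter.atTop (nhds (f x / (f x) ^ 2)) := by
          have hd : Filter.Tendsto (fun n : ℕ => (u n x) ^ 2 + 1 / (n + 1 : ℝ))
              Filter.atTop (nhds ((f x) ^ 2)) := by
            have := ((hu x).pow 2).add tendsto_one_div_add_atTop_nhds_zero_nat
            simpa using this
          exact (hu x).div hd (pow_ne_zero 2 (hne x))
        have : f x / (f x) ^ 2 = g x := by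
          rw [hg]; field_simp [sq]
        rw [this] at h1
        exact h1
    refine IsUnit.of_mul_eq_one (a := (⟨f, hf⟩ : B)) ⟨g, hgB⟩ ?_
    ext x
    exact mul_inv_cancel₀ (hne x)
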